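/- Let I be a set, let U be a non-principal ultrafilter on I, and let 3 ≤ m, n ≤ ω. For each i ∈ I let P_i be a poset, and let [a], [b] be elements of the ultraproduct ∏_U P_i. Suppose there is u ∈ U such that for all i ∈ u there is an (m,n)-filter Γ_i of P_i with a(i) ∈ Γ_i and b(i) ∉ Γ_i. Then there is an (m,n)-filter Γ of ∏_U P_i with [a] ∈ Γ and [b] ∉ Γ. -/

import Mathlib

open Cardinal

universe u

/-- An `(α,β)`-filter: an up-closed set, closed under all existing meets of subsets of
itself of cardinality `< α`, and meeting every subset of `P` of cardinality `< β` whose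
join exists and lies in the set. -/
def IsMNFilter (α β : Cardinal.{u}) {P : Type u} [PartialOrder P] (Γ : Set P) : Prop :=
  (∀ x ∈ Γ, ∀ y : P, x ≤ y → y ∈ Γ) ∧
  (∀ S : Set P, S ⊆ Γ → #S < α → ∀ a : P, IsGLB S a → a ∈ Γ) ∧
  (∀ T : Set P, #T < β → ∀ a : P, IsLUB T a → a ∈ Γ → (T ∩ Γ).Nonempty)

/-- The setoid on `∀ i, P i` identifying functions that agree on a set belonging to `U`. -/
def upSetoid {ι : Type u} (U : Ultrafilter ι) (P : ι → Type u) : Setoid (∀ i, P i) where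
  r x y := {i | x i = y i} ∈ U
  iseqv := by
    refine ⟨fun x => by
        rw [show {i | x i = x i} = Set.univ by simp]; exact Filter.univ_mem,
      fun {x y} h => ?_, fun {x y z} h1 h2 => ?_⟩
    · exact Filter.mem_of_superset h fun i hi => hi.symm
    · filter_upwards [h1, h2] with i hi1 hi2 using hi1.trans hi2

/-- The ultraproduct of the family `P` of posets over the ultrafilter `U`. -/
def UProd {ι : Type u} (U : Ultrafilter ι) (P : ι → Type u) : Type u :=
  Quotient (upSetoid U P)

instance uprodPartialOrder {ι : Type u} (U : Ultrafilter ι) (P : ι → Type u)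
    [∀ i, PartialOrder (P i)] : PartialOrder (UProd U P) where
  le := Quotient.lift₂ (fun x y => {i | x i ≤ y i} ∈ U) (by
    intro a₁ b₁ a₂ b₂ h₁ h₂
    apply propext
    constructor <;> intro h
    · filter_upwards [h, h₁, h₂] with i hle he1 he2
      rw [← he1, ← he2]; exact hle
    · filter_upwards [h, h₁, h₂] with i hle he1 he2
      rw [he1, he2]; exact hle)
  le_refl := by
    rintro ⟨x⟩
    show {i | x i ≤ x i} ∈ U
    rw [show {i | x i ≤ x i} = Set.univ by simp]
    exact Filter.univ_mem
  le_trans := by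
    rintro ⟨x⟩ ⟨y⟩ ⟨z⟩ h1 h2
    show {i | x i ≤ z i} ∈ U
    filter_upwards [(h1 : {i | x i ≤ y i} ∈ U), (h2 : {i | y i ≤ z i} ∈ U)] with i u1 u2
      using le_trans u1 u2
  le_antisymm := by
    rintro ⟨x⟩ ⟨y⟩ h1 h2
    apply Quotient.sound
    show {i | x i = y i} ∈ U
    filter_upwards [(h1 : {i | x i ≤ y i} ∈ U), (h2 : {i | y i ≤ x i} ∈ U)] with i u1 u2
      using le_antisymm u1 u2

/-- Separating `(m,n)`-filters in `U`-many coordinates yield a separating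
`(m,n)`-filter in the ultraproduct. -/
theorem statement1 {ι : Type u} (U : Ultrafilter ι) (hU : ∀ i : ι, U ≠ pure i)
    (m n : Cardinal.{u}) (hm3 : 3 ≤ m) (hmω : m ≤ ℵ₀) (hn3 : 3 ≤ n) (hnω : n ≤ ℵ₀)
    (P : ι → Type u) [∀ i, PartialOrder (P i)] (a b : ∀ i, P i)
    (u : Set ι) (hu : u ∈ U)
    (h : ∀ i ∈ u, ∃ Γi : Set (P i), IsMNFilter m n Γi ∧ a i ∈ Γi ∧ b i ∉ Γi) :
    ∃ Γ : Set (UProd U P), IsMNFilter m n Γ ∧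
      Quotient.mk (upSetoid U P) a ∈ Γ ∧ Quotient.mk (upSetoid U P) b ∉ Γ := by
  classical
  choose Γs hΓs ha hb using h
  -- the coordinatewise membership set
  set A : (∀ i, P i) → Set ι := fun x => {i | ∃ hi : i ∈ u, x i ∈ Γs i hi} with hAdef
  have hwd : ∀ x y : ∀ i, P i, {i | x i = y i} ∈ U → A x ∈ U → A y ∈ U := by
    intro x y hxy hx
    filter_upwards [hxy, hx] with i he hmem
    obtain ⟨hi, hm'⟩ := hmem
    exact ⟨hi, he ▸ hm'⟩
  set Γ : Set (UProd U P) := {q | ∃ x, Quotient.mk (upSetoid U P) x = q ∧ A x ∈ U}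
    with hΓdef
  have hmk_mem : ∀ x : ∀ i, P i, (Quotient.mk (upSetoid U P) x ∈ Γ ↔ A x ∈ U) := by
    intro x
    constructor
    · rintro ⟨y, hy, hAy⟩
      exact hwd y x (Quotient.exact hy) hAy
    · intro hx; exact ⟨x, rfl, hx⟩
  have hout : ∀ q : UProd U P, Quotient.mk (upSetoid U P) q.out = q :=
    fun q => Quotient.out_eq q
  have hmem_out : ∀ q : UProd U P, q ∈ Γ ↔ A q.out ∈ U := by
    intro q
    conv_lhs => rw [← hout q]
    exact hmk_mem q.out
  let mkU : (∀ i, P i) → UProd U P := fun x => Quotient.mk (upSetoid U P) x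
  have hle : ∀ x y : ∀ i, P i,
      (mkU x ≤ mkU y) ↔ {i | x i ≤ y i} ∈ U := fun _ _ => Iff.rfl
  refine ⟨Γ, ⟨?_, ?_, ?_⟩, ?_, ?_⟩
  · -- up-closed
    rintro q hq r hqr
    obtain ⟨x, hx, hAx⟩ := hq
    rw [hmem_out]
    have hxr : {i | x i ≤ r.out i} ∈ U := by
      have h2 := hqr
      rw [← hx, ← hout r] at h2
      exact (hle _ _).mp h2
    filter_upwards [hAx, hxr] with i hAi hlei
    obtain ⟨hi, hmi⟩ := hAi
    exact ⟨hi, (hΓs i hi).1 _ hmi _ hlei⟩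
  · -- meets
    intro S hSΓ hSm q₀ hglb
    have hSfin : S.Finite := lt_aleph0_iff_set_finite.mp (lt_of_lt_of_le hSm hmω)
    rw [hmem_out]
    -- lower bound set
    have hLB : {i | ∀ s ∈ S, q₀.out i ≤ s.out i} ∈ U := by
      have h1 : (⋂ s ∈ S, {i | q₀.out i ≤ s.out i}) ∈ (U : Filter ι) := by
        rw [Filter.biInter_mem hSfin]
        intro s hs
        have h2 := hglb.1 hs
        rw [← hout q₀, ← hout s] at h2
        exact (hle _ _).mp h2
      refine Filter.mem_of_superset h1 ?_
      intro i hi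
      simp only [Set.mem_iInter] at hi
      exact fun s hs => hi s hs
    -- the "bad" set is small
    have hB : {i | ∃ c : P i, (∀ s ∈ S, c ≤ s.out i) ∧ ¬ c ≤ q₀.out i}ᶜ ∈ U := by
      rw [Ultrafilter.compl_mem_iff_notMem]
      intro hB
      set B := {i | ∃ c : P i, (∀ s ∈ S, c ≤ s.out i) ∧ ¬ c ≤ q₀.out i} with hBdef
      have : ∀ i : ι, ∃ c : P i, i ∈ B → (∀ s ∈ S, c ≤ s.out i) ∧ ¬ c ≤ q₀.out i := by
        intro i
        by_cases hi : i ∈ B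
        · obtain ⟨c, hc⟩ := hi; exact ⟨c, fun _ => hc⟩
        · exact ⟨q₀.out i, fun h' => absurd h' hi⟩
      choose c hc using this
      have hlbc : Quotient.mk (upSetoid U P) c ∈ lowerBounds S := by
        intro s hs
        rw [← hout s, hle]
        filter_upwards [hB] with i hi
        exact (hc i hi).1 s hs
      have := hglb.2 hlbc
      rw [← hout q₀, hle] at this
      obtain ⟨i, hi1, hi2⟩ := Filter.nonempty_of_mem (Filter.inter_mem hB this)
      exact (hc i hi1).2 hi2
    -- membership sets for elements of S
    have hF : (⋂ s ∈ S, A s.out) ∈ (U : Filter ι) := by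
      rw [Filter.biInter_mem hSfin]
      intro s hs
      exact (hmem_out s).mp (hSΓ hs)
    filter_upwards [hLB, hB, hF, hu] with i hLBi hBi hFi hui
    simp only [Set.mem_iInter] at hFi
    refine ⟨hui, (hΓs i hui).2.1 ((fun s : UProd U P => s.out i) '' S) ?_ ?_ _ ?_⟩
    · rintro x ⟨s, hs, rfl⟩
      obtain ⟨_, hmi⟩ := hFi s hs
      exact hmi
    · exact lt_of_le_of_lt mk_image_le hSm
    · constructor
      · rintro x ⟨s, hs, rfl⟩
        exact hLBi s hs
      · intro c hc
        by_contra hcon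
        exact hBi ⟨c, fun s hs => hc ⟨s, hs, rfl⟩, hcon⟩
  · -- joins
    intro T hTn q₀ hlub hq₀
    have hTfin : T.Finite := lt_aleph0_iff_set_finite.mp (lt_of_lt_of_le hTn hnω)
    rw [hmem_out] at hq₀
    have hUB : {i | ∀ t ∈ T, t.out i ≤ q₀.out i} ∈ U := by
      have h1 : (⋂ t ∈ T, {i | t.out i ≤ q₀.out i}) ∈ (U : Filter ι) := by
        rw [Filter.biInter_mem hTfin]
        intro t ht
        have h2 := hlub.1 ht
        rw [← hout t, ← hout q₀] at h2
        exact (hle _ _).mp h2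
      refine Filter.mem_of_superset h1 ?_
      intro i hi
      simp only [Set.mem_iInter] at hi
      exact fun t ht => hi t ht
    have hB : {i | ∃ c : P i, (∀ t ∈ T, t.out i ≤ c) ∧ ¬ q₀.out i ≤ c}ᶜ ∈ U := by
      rw [Ultrafilter.compl_mem_iff_notMem]
      intro hB
      set B := {i | ∃ c : P i, (∀ t ∈ T, t.out i ≤ c) ∧ ¬ q₀.out i ≤ c} with hBdef
      have : ∀ i : ι, ∃ c : P i, i ∈ B → (∀ t ∈ T, t.out i ≤ c) ∧ ¬ q₀.out i ≤ c := by
        intro i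
        by_cases hi : i ∈ B
        · obtain ⟨c, hc⟩ := hi; exact ⟨c, fun _ => hc⟩
        · exact ⟨q₀.out i, fun h' => absurd h' hi⟩
      choose c hc using this
      have hubc : Quotient.mk (upSetoid U P) c ∈ upperBounds T := by
        intro t ht
        rw [← hout t, hle]
        filter_upwards [hB] with i hi
        exact (hc i hi).1 t ht
      have := hlub.2 hubc
      rw [← hout q₀, hle] at this
      obtain ⟨i, hi1, hi2⟩ := Filter.nonempty_of_mem (Filter.inter_mem hB this)
      exact (hc i hi1).2 hi2
    have hG : {i | ∀ hi : i ∈ u, ∃ t ∈ T, t.out i ∈ Γs i hi} ∈ U := by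
      filter_upwards [hUB, hB, hq₀, hu] with i hUBi hBi hAi hui
      intro hi
      obtain ⟨_, hq₀i⟩ := hAi
      have hlubi : IsLUB ((fun t : UProd U P => t.out i) '' T) (q₀.out i) := by
        constructor
        · rintro x ⟨t, ht, rfl⟩
          exact hUBi t ht
        · intro c hc
          by_contra hcon
          exact hBi ⟨c, fun t ht => hc ⟨t, ht, rfl⟩, hcon⟩
      obtain ⟨x, ⟨t, ht, rfl⟩, hxΓ⟩ := (hΓs i hi).2.2 ((fun t : UProd U P => t.out i) '' T)
        (lt_of_le_of_lt mk_image_le hTn) _ hlubi hq₀i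
      exact ⟨t, ht, hxΓ⟩
    have hUnion : (⋃ t ∈ T, A t.out) ∈ U := by
      refine Filter.mem_of_superset (Filter.inter_mem hG hu) ?_
      rintro i ⟨hGi, hui⟩
      obtain ⟨t, ht, htΓ⟩ := hGi hui
      exact Set.mem_biUnion ht ⟨hui, htΓ⟩
    obtain ⟨t, ht, hAt⟩ := (Ultrafilter.finite_biUnion_mem_iff hTfin).mp hUnion
    refine ⟨t, ht, ?_⟩
    rw [hmem_out]
    exact hAt
  · exact (hmk_mem a).mpr (Filter.mem_of_superset hu fun i hi => ⟨hi, ha i hi⟩)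
  · intro hbΓ
    rw [hmk_mem] at hbΓ
    obtain ⟨i, hi1, hi2⟩ := Filter.nonempty_of_mem (Filter.inter_mem hbΓ hu)
    obtain ⟨hi, hmi⟩ := hi1
    exact hb i hi hmi
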